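/- Let (α₁, α₂, β₁, β₂) be a linear contact pair of type (h,k) on a real vector space V of dimension 2h+2k+2, with Reeb vectors Z₁, Z₂. Set F₁ = ker α₁ ∩ ker β₁, F₂ = ker α₂ ∩ ker β₂, G₁ = ker β₁ ∩ ker α₁ ∩ ker α₂ and G₂ = ker β₂ ∩ ker α₁ ∩ ker α₂, where ker β = {v ∈ V : β(v, ·) = 0}. Then V = G₁ ⊕ G₂ ⊕ ℝZ₁ ⊕ ℝZ₂ (internal direct sum), and moreover F₁ = G₁ ⊕ ℝZ₂ and F₂ = G₂ ⊕ ℝZ₁. -/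

import Mathlib

open scoped TensorProduct

/-- The wedge product of two real-valued alternating forms (determinant/shuffle convention). -/
noncomputable def wedge {V : Type*} [AddCommGroup V] [Module ℝ V] {a b : ℕ}
    (ω : V [⋀^Fin a]→ₗ[ℝ] ℝ) (η : V [⋀^Fin b]→ₗ[ℝ] ℝ) :
    V [⋀^Fin (a + b)]→ₗ[ℝ] ℝ :=
  AlternatingMap.domDomCongr finSumFinEquiv
    ((TensorProduct.lid ℝ ℝ).toLinearMap.compAlternatingMap (ω.domCoprod η))

/-- A linear functional regarded as an alternating 1-form. -/
noncomputable def oneForm {V : Type*} [AddCommGroup V] [Module ℝ V]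
    (α : V →ₗ[ℝ] ℝ) : V [⋀^Fin 1]→ₗ[ℝ] ℝ :=
  AlternatingMap.ofSubsingleton ℝ V ℝ (0 : Fin 1) α

/-- Wedge powers of an alternating 2-form. -/
noncomputable def wpow {V : Type*} [AddCommGroup V] [Module ℝ V]
    (β : V [⋀^Fin 2]→ₗ[ℝ] ℝ) : (n : ℕ) → V [⋀^Fin (2 * n)]→ₗ[ℝ] ℝ
  | 0 => AlternatingMap.domDomCongr (finCongr (by omega))
      (AlternatingMap.constOfIsEmpty ℝ V (Fin 0) 1)
  | n + 1 => AlternatingMap.domDomCongr (finCongr (by omega : 2 + 2 * n = 2 * (n + 1)))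
      (wedge β (wpow β n))

/-- The top-degree form `α₁ ∧ β₁^h ∧ α₂ ∧ β₂^k`. -/
noncomputable def cpForm {V : Type*} [AddCommGroup V] [Module ℝ V] (h k : ℕ)
    (α₁ α₂ : V →ₗ[ℝ] ℝ) (β₁ β₂ : V [⋀^Fin 2]→ₗ[ℝ] ℝ) :
    V [⋀^Fin (1 + (2 * h + (1 + 2 * k)))]→ₗ[ℝ] ℝ :=
  wedge (oneForm α₁) (wedge (wpow β₁ h) (wedge (oneForm α₂) (wpow β₂ k)))

/-- A linear contact pair of type `(h, k)`:
`α₁ ∧ β₁^h ∧ α₂ ∧ β₂^k ≠ 0`, `β₁^(h+1) = 0` and `β₂^(k+1) = 0`. -/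
structure IsLinearContactPair {V : Type*} [AddCommGroup V] [Module ℝ V] (h k : ℕ)
    (α₁ α₂ : V →ₗ[ℝ] ℝ) (β₁ β₂ : V [⋀^Fin 2]→ₗ[ℝ] ℝ) : Prop where
  top_ne_zero : cpForm h k α₁ α₂ β₁ β₂ ≠ 0
  pow_fst : wpow β₁ (h + 1) = 0
  pow_snd : wpow β₂ (k + 1) = 0

/-- The Reeb conditions for a pair of vectors `(Z₁, Z₂)`:
`α₁(Z₁) = α₂(Z₂) = 1`, `α₁(Z₂) = α₂(Z₁) = 0` and `β₁(Zᵢ, ·) = β₂(Zᵢ, ·) = 0`. -/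
def IsReebPair {V : Type*} [AddCommGroup V] [Module ℝ V]
    (α₁ α₂ : V →ₗ[ℝ] ℝ) (β₁ β₂ : V [⋀^Fin 2]→ₗ[ℝ] ℝ) (Z₁ Z₂ : V) : Prop :=
  α₁ Z₁ = 1 ∧ α₂ Z₂ = 1 ∧ α₁ Z₂ = 0 ∧ α₂ Z₁ = 0 ∧
    β₁.curryLeft Z₁ = 0 ∧ β₂.curryLeft Z₁ = 0 ∧ β₁.curryLeft Z₂ = 0 ∧ β₂.curryLeft Z₂ = 0

/-- An inner product (symmetric positive-definite bilinear form). -/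
def IsInnerProduct {V : Type*} [AddCommGroup V] [Module ℝ V]
    (g : V →ₗ[ℝ] V →ₗ[ℝ] ℝ) : Prop :=
  (∀ x y, g x y = g y x) ∧ ∀ x, x ≠ 0 → 0 < g x x


/-! ### Auxiliary machinery -/

open Module

section KillsMachinery
variable {V : Type*} [AddCommGroup V] [Module ℝ V]

theorem wedge_apply {a b : ℕ} (ω : V [⋀^Fin a]→ₗ[ℝ] ℝ) (η : V [⋀^Fin b]→ₗ[ℝ] ℝ)
    (u : Fin (a + b) → V) :
    wedge ω η u = ∑ σ : Equiv.Perm.ModSumCongr (Fin a) (Fin b),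
      TensorProduct.lid ℝ ℝ
        (AlternatingMap.domCoprod.summand ω η σ (u ∘ finSumFinEquiv)) := by
  rw [wedge]
  rw [AlternatingMap.domDomCongr_apply, LinearMap.compAlternatingMap_apply,
    AlternatingMap.domCoprod_apply, MultilinearMap.sum_apply]
  rw [map_sum]
  rfl

/-- `Kills ω v`: `ω` vanishes on any tuple containing `v`. -/
def Kills {p : ℕ} (ω : V [⋀^Fin p]→ₗ[ℝ] ℝ) (v : V) : Prop :=
  ∀ u : Fin p → V, (∃ i, u i = v) → ω u = 0

theorem Kills.wedge {a b : ℕ} {ω : V [⋀^Fin a]→ₗ[ℝ] ℝ} {η : V [⋀^Fin b]→ₗ[ℝ] ℝ} {v : V}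
    (hω : Kills ω v) (hη : Kills η v) : Kills (wedge ω η) v := by
  rintro u ⟨i, hi⟩
  rw [wedge_apply]
  refine Finset.sum_eq_zero fun q _ => ?_
  induction q using Quotient.inductionOn' with
  | h σ =>
    rw [show (Quotient.mk'' σ : Equiv.Perm.ModSumCongr (Fin a) (Fin b)) = Quotient.mk'' σ from rfl]
    rw [AlternatingMap.domCoprod.summand_mk'']
    rw [MultilinearMap.smul_apply, MultilinearMap.domDomCongr_apply,
      MultilinearMap.domCoprod_apply]
    have hU : (u ∘ finSumFinEquiv) (finSumFinEquiv.symm i) = v := by simp [hi]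
    rcases h : σ⁻¹ (finSumFinEquiv.symm i) with x | y
    · have : (fun j => (u ∘ finSumFinEquiv) (σ (Sum.inl j))) x = v := by
        simp only []
        rw [show σ (Sum.inl x) = finSumFinEquiv.symm i by
          rw [← h]; exact σ.apply_symm_apply _]
        exact hU
      rw [AlternatingMap.coe_multilinearMap, AlternatingMap.coe_multilinearMap,
        hω _ ⟨x, this⟩, TensorProduct.zero_tmul, smul_zero, LinearEquiv.map_zero]
    · have : (fun j => (u ∘ finSumFinEquiv) (σ (Sum.inr j))) y = v := by
        simp only []
        rw [show σ (Sum.inr y) = finSumFinEquiv.symm i by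
          rw [← h]; exact σ.apply_symm_apply _]
        exact hU
      rw [AlternatingMap.coe_multilinearMap, AlternatingMap.coe_multilinearMap,
        hη _ ⟨y, this⟩, TensorProduct.tmul_zero, smul_zero, LinearEquiv.map_zero]

theorem kills_oneForm {α : V →ₗ[ℝ] ℝ} {v : V} (hv : α v = 0) : Kills (oneForm α) v := by
  rintro u ⟨i, hi⟩
  have : u 0 = v := by rw [Subsingleton.elim (0 : Fin 1) i, hi]
  simp [oneForm, AlternatingMap.ofSubsingleton, this, hv]

theorem kills_two {β : V [⋀^Fin 2]→ₗ[ℝ] ℝ} {v : V} (hv : β.curryLeft v = 0) :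
    Kills β v := by
  have key : ∀ u : Fin 2 → V, u 0 = v → β u = 0 := by
    intro u h0
    have : u = Matrix.vecCons v (fun _ => u 1) := by
      funext j
      refine Fin.cases ?_ (fun j => ?_) j
      · exact h0
      · rw [Subsingleton.elim j (0 : Fin 1)]; rfl
    rw [this]
    have := congrFun (congrArg (fun (f : V [⋀^Fin 1]→ₗ[ℝ] ℝ) => f.toFun) hv) (fun _ => u 1)
    simpa [AlternatingMap.curryLeft, Matrix.vecCons] using this
  rintro u ⟨i, hi⟩
  fin_cases i
  · exact key u hi
  · have : β (u ∘ Equiv.swap (0 : Fin 2) 1) = 0 := by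
      refine key _ ?_
      simpa using hi
    rw [AlternatingMap.map_swap β u (by decide : (0 : Fin 2) ≠ 1)] at this
    linarith [this]

theorem kills_domDomCongr {p q : ℕ} {ω : V [⋀^Fin p]→ₗ[ℝ] ℝ} {v : V} (e : Fin p ≃ Fin q)
    (hω : Kills ω v) : Kills (AlternatingMap.domDomCongr e ω) v := by
  rintro u ⟨i, hi⟩
  rw [AlternatingMap.domDomCongr_apply]
  exact hω _ ⟨e.symm i, by simp [hi]⟩

theorem kills_wpow {β : V [⋀^Fin 2]→ₗ[ℝ] ℝ} {v : V} (hv : β.curryLeft v = 0) (m : ℕ) :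
    Kills (wpow β m) v := by
  induction m with
  | zero =>
    rintro u ⟨i, -⟩
    exact absurd i.isLt (by omega)
  | succ m ih =>
    rw [show wpow β (m + 1) = AlternatingMap.domDomCongr
        (finCongr (by omega : 2 + 2 * m = 2 * (m + 1))) (wedge β (wpow β m)) from rfl]
    exact kills_domDomCongr _ ((kills_two hv).wedge ih)

theorem exists_ne_zero_of_alternatingMap_ne_zero {p : ℕ} {Ω : V [⋀^Fin p]→ₗ[ℝ] ℝ}
    (hΩ : Ω ≠ 0) : ∃ u : Fin p → V, Ω u ≠ 0 := by
  by_contra hco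
  push_neg at hco
  exact hΩ (AlternatingMap.ext fun u => by simpa using hco u)

theorem eq_zero_of_kills [FiniteDimensional ℝ V] {p : ℕ} {Ω : V [⋀^Fin p]→ₗ[ℝ] ℝ}
    (hΩ : Ω ≠ 0) (hp : p = Module.finrank ℝ V) {v : V} (h : Kills Ω v) : v = 0 := by
  classical
  rcases Nat.eq_zero_or_pos p with hp0 | hp0
  · have h0 : Module.finrank ℝ V = 0 := by omega
    have : Subsingleton V := by
      rw [Module.finrank_zero_iff (R := ℝ) (M := V)] at h0; exact h0
    exact Subsingleton.elim v 0
  haveI : Nonempty (Fin p) := ⟨⟨0, hp0⟩⟩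
  obtain ⟨u, hu⟩ := exists_ne_zero_of_alternatingMap_ne_zero hΩ
  have li : LinearIndependent ℝ u := by
    by_contra hdep
    exact hu (AlternatingMap.map_linearDependent Ω u hdep)
  let B := basisOfLinearIndependentOfCardEqFinrank li (by simpa using hp)
  have hB : ∀ i, B i = u i := fun i => coe_basisOfLinearIndependentOfCardEqFinrank li _ ▸ rfl
  have hrepr : ∀ j, B.repr v j = 0 := by
    intro j
    have h0 : Ω.toMultilinearMap (Function.update u j v) = 0 := h _ ⟨j, by simp⟩
    have hv : v = ∑ i, B.repr v i • u i := by
      conv_lhs => rw [← B.sum_repr v]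
      exact Finset.sum_congr rfl fun i _ => by rw [hB]
    rw [hv] at h0
    rw [MultilinearMap.map_update_sum Ω.toMultilinearMap Finset.univ j
      (fun i => B.repr v i • u i) u] at h0
    have : ∀ i ∈ Finset.univ, i ≠ j →
        Ω.toMultilinearMap (Function.update u j (B.repr v i • u i)) = 0 := by
      intro i _ hij
      rw [MultilinearMap.map_update_smul]
      have : Ω (Function.update u j (u i)) = 0 := by
        refine AlternatingMap.map_eq_zero_of_eq _ _ (i := i) (j := j) ?_ hij
        rw [Function.update_of_ne hij, Function.update_self]
      change B.repr v i • Ω (Function.update u j (u i)) = 0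
      rw [this, smul_zero]
    rw [Finset.sum_eq_single_of_mem j (Finset.mem_univ j) (fun i hi hij => this i hi hij)] at h0
    rw [MultilinearMap.map_update_smul] at h0
    change B.repr v j • Ω (Function.update u j (u j)) = 0 at h0
    rw [Function.update_eq_self, smul_eq_mul] at h0
    exact (mul_eq_zero.mp h0).resolve_right hu
  have := B.repr.map_eq_zero_iff.mp (by ext j; simpa using hrepr j)
  exact this

end KillsMachinery

section Aux3
variable {V : Type*} [AddCommGroup V] [Module ℝ V]

theorem finrank_inf_ker_ge [FiniteDimensional ℝ V] (p : Submodule ℝ V) (φ : V →ₗ[ℝ] ℝ) :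
    finrank ℝ p ≤ finrank ℝ ↥(p ⊓ LinearMap.ker φ) + 1 := by
  have h1 := LinearMap.finrank_range_add_finrank_ker (φ.comp p.subtype)
  have h2 : finrank ℝ ↥(LinearMap.range (φ.comp p.subtype)) ≤ 1 := by
    simpa using (LinearMap.range (φ.comp p.subtype)).finrank_le
  have h3 : LinearMap.ker (φ.comp p.subtype) =
      Submodule.comap p.subtype (LinearMap.ker φ) := LinearMap.ker_comp _ _
  have h4 : finrank ℝ ↥(Submodule.comap p.subtype (LinearMap.ker φ)) =
      finrank ℝ ↥(p ⊓ LinearMap.ker φ) := by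
    rw [← Submodule.finrank_map_subtype_eq p, Submodule.map_comap_subtype]
  rw [h3, h4] at h1
  omega

variable (b : V →ₗ[ℝ] V →ₗ[ℝ] ℝ)

/-- The kernel of the restriction of `b` to a subspace `W`. -/
noncomputable def bKer (W : Submodule ℝ V) : Submodule ℝ V :=
  W ⊓ Submodule.comap b W.dualAnnihilator

theorem mem_bKer {W : Submodule ℝ V} {w : V} :
    w ∈ bKer b W ↔ w ∈ W ∧ ∀ x ∈ W, b w x = 0 := by
  simp [bKer, Submodule.mem_dualAnnihilator]

theorem exists_symplectic [FiniteDimensional ℝ V]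
    (hskew : ∀ x y, b x y = - b y x) (m : ℕ) :
    ∀ W : Submodule ℝ V, finrank ℝ ↥(bKer b W) + 2 * m ≤ finrank ℝ ↥W + 1 →
    ∃ e f : Fin m → V, (∀ i, e i ∈ W) ∧ (∀ i, f i ∈ W) ∧
      (∀ i j, b (e i) (e j) = 0) ∧ (∀ i j, b (f i) (f j) = 0) ∧
      (∀ i j, b (e i) (f j) = if i = j then 1 else 0) := by
  have hself : ∀ x, b x x = 0 := fun x => by have := hskew x x; linarith
  induction m with
  | zero =>
    intro W _
    exact ⟨Fin.elim0, Fin.elim0, fun i => i.elim0, fun i => i.elim0,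
      fun i => i.elim0, fun i => i.elim0, fun i => i.elim0⟩
  | succ m ih =>
    intro W hW
    have hlt : bKer b W < W := by
      refine lt_of_le_of_ne inf_le_left fun hEq => ?_
      rw [hEq] at hW; omega
    obtain ⟨e, heW', heK⟩ := SetLike.exists_of_lt hlt
    obtain ⟨f', hf'W, hbef'⟩ : ∃ x ∈ W, b e x ≠ 0 := by
      by_contra hcon
      push_neg at hcon
      exact heK ((mem_bKer b).mpr ⟨heW', hcon⟩)
    set f : V := (b e f')⁻¹ • f' with hf
    have hfW : f ∈ W := W.smul_mem _ hf'W
    have hbef : b e f = 1 := by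
      rw [hf, map_smul, smul_eq_mul]
      exact inv_mul_cancel₀ hbef'
    have hbfe : b f e = -1 := by rw [hskew, hbef]
    set W' : Submodule ℝ V := W ⊓ LinearMap.ker (b e) ⊓ LinearMap.ker (b f) with hW'
    have hW'le : W' ≤ W := le_trans inf_le_left inf_le_left
    have hW'e : ∀ x ∈ W', b e x = 0 := fun x hx => hx.1.2
    have hW'f : ∀ x ∈ W', b f x = 0 := fun x hx => hx.2
    have hrk : finrank ℝ ↥W ≤ finrank ℝ ↥W' + 2 := by
      have g1 := finrank_inf_ker_ge (p := W) (φ := b e)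
      have g2 := finrank_inf_ker_ge (p := W ⊓ LinearMap.ker (b e)) (φ := b f)
      rw [← hW'] at g2
      omega
    set L : V →ₗ[ℝ] V := LinearMap.id - LinearMap.smulRight (b.flip f) e
      + LinearMap.smulRight (b.flip e) f with hL
    have hLapp : ∀ v, L v = v - b v f • e + b v e • f := fun v => rfl
    have hdecomp : ∀ x ∈ W, x - (- b f x) • e - (b e x) • f ∈ W' := by
      intro x hx
      refine Submodule.mem_inf.mpr ⟨Submodule.mem_inf.mpr ⟨?_, ?_⟩, ?_⟩
      · exact W.sub_mem (W.sub_mem hx (W.smul_mem _ heW')) (W.smul_mem _ hfW)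
      · rw [LinearMap.mem_ker]
        simp only [map_sub, map_smul, smul_eq_mul, hself, hbef, hbfe]
        ring
      · rw [LinearMap.mem_ker]
        simp only [map_sub, map_smul, smul_eq_mul, hself, hbef, hbfe]
        ring
    have hLK : ∀ w ∈ bKer b W', L w ∈ bKer b W := by
      intro w hw
      obtain ⟨hwW', hwann⟩ := (mem_bKer b).mp hw
      have hwW : w ∈ W := hW'le hwW'
      refine (mem_bKer b).mpr ⟨?_, ?_⟩
      · rw [hLapp]
        exact W.add_mem (W.sub_mem hwW (W.smul_mem _ heW')) (W.smul_mem _ hfW)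
      · intro x hx
        have hbLwe : b (L w) e = 0 := by
          rw [hLapp]
          simp only [map_add, map_sub, map_smul, LinearMap.add_apply, LinearMap.sub_apply,
            LinearMap.smul_apply, LinearMap.id_apply, smul_eq_mul, hself, hbfe]
          ring
        have hbLwf : b (L w) f = 0 := by
          rw [hLapp]
          simp only [map_add, map_sub, map_smul, LinearMap.add_apply, LinearMap.sub_apply,
            LinearMap.smul_apply, LinearMap.id_apply, smul_eq_mul, hself, hbef]
          ring
        have hbLwW' : ∀ y ∈ W', b (L w) y = 0 := by
          intro y hy
          rw [hLapp]
          simp only [map_add, map_sub, map_smul, LinearMap.add_apply, LinearMap.sub_apply,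
            LinearMap.smul_apply, LinearMap.id_apply, smul_eq_mul]
          rw [hwann y hy, hW'e y hy, hW'f y hy]
          ring
        have hxdec := hdecomp x hx
        have hxeq : x = (x - (- b f x) • e - (b e x) • f) + (- b f x) • e + (b e x) • f := by
          abel
        rw [hxeq]
        simp only [map_add, map_smul, smul_eq_mul]
        rw [hbLwW' _ hxdec, hbLwe, hbLwf]
        ring
    have hLinj : ∀ w ∈ W', L w = 0 → w = 0 := by
      intro w hwW' hLw
      have h0 : w - b w f • e + b w e • f = 0 := by rw [← hLapp w, hLw]
      have heqn : w = b w f • e - b w e • f := by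
        have : w - (b w f • e - b w e • f) = w - b w f • e + b w e • f := by abel
        rw [← sub_eq_zero, this, h0]
      have h1 : b e w = 0 := hW'e w hwW'
      have h2 : b f w = 0 := hW'f w hwW'
      rw [heqn] at h1 h2
      simp only [map_sub, map_smul, smul_eq_mul, hself, hbef, hbfe] at h1 h2
      have h1' : b w e = 0 := by linarith
      have h2' : b w f = 0 := by linarith
      rw [heqn, h1', h2']
      simp
    have hrkK : finrank ℝ ↥(bKer b W') ≤ finrank ℝ ↥(bKer b W) := by
      set L' := L.comp (bKer b W').subtype with hL'
      have hinj : Function.Injective L' := by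
        rw [← LinearMap.ker_eq_bot]
        apply (LinearMap.ker_eq_bot').mpr
        intro x hx
        exact Subtype.ext (hLinj x (((mem_bKer b).mp x.2).1) hx)
      have hr : LinearMap.range L' ≤ bKer b W := by
        rintro y ⟨x, rfl⟩
        exact hLK x x.2
      calc finrank ℝ ↥(bKer b W') = finrank ℝ ↥(LinearMap.range L') :=
            (LinearMap.finrank_range_of_inj hinj).symm
        _ ≤ finrank ℝ ↥(bKer b W) := Submodule.finrank_mono hr
    obtain ⟨e', f', he'W, hf'W2, hee, hff, hef⟩ := ih W' (by omega)
    refine ⟨Fin.cons e e', Fin.cons f f', ?_, ?_, ?_, ?_, ?_⟩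
    · intro i
      refine Fin.cases ?_ (fun j => ?_) i
      · exact heW'
      · exact hW'le (he'W j)
    · intro i
      refine Fin.cases ?_ (fun j => ?_) i
      · exact hfW
      · exact hW'le (hf'W2 j)
    · intro i j
      refine Fin.cases ?_ (fun i' => ?_) i <;> refine Fin.cases ?_ (fun j' => ?_) j
      · simpa using hself e
      · simpa using hW'e _ (he'W j')
      · simp only [Fin.cons_succ, Fin.cons_zero]
        rw [hskew]; rw [hW'e _ (he'W i')]; ring
      · simpa using hee i' j'
    · intro i j
      refine Fin.cases ?_ (fun i' => ?_) i <;> refine Fin.cases ?_ (fun j' => ?_) j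
      · simpa using hself f
      · simpa using hW'f _ (hf'W2 j')
      · simp only [Fin.cons_succ, Fin.cons_zero]
        rw [hskew]; rw [hW'f _ (hf'W2 i')]; ring
      · simpa using hff i' j'
    · intro i j
      refine Fin.cases ?_ (fun i' => ?_) i <;> refine Fin.cases ?_ (fun j' => ?_) j
      · simpa using hbef
      · simp only [Fin.cons_succ, Fin.cons_zero]
        rw [hW'e _ (hf'W2 j')]
        simp [(Fin.succ_ne_zero j').symm]
      · simp only [Fin.cons_succ, Fin.cons_zero]
        rw [hskew, hW'f _ (he'W i')]
        simp [Fin.succ_ne_zero i']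
      · rw [Fin.cons_succ, Fin.cons_succ, hef i' j']
        simp [Fin.succ_inj]
end Aux3

section Aux4
variable {V : Type*} [AddCommGroup V] [Module ℝ V]

/-- interleaving of two families -/
def itl {m : ℕ} (e f : Fin m → V) : Fin (2 * m) → V := fun i =>
  if (i : ℕ) % 2 = 0 then e ⟨(i : ℕ) / 2, by have := i.isLt; omega⟩
  else f ⟨(i : ℕ) / 2, by have := i.isLt; omega⟩

theorem itl_even {m : ℕ} (e f : Fin m → V) (i : Fin (2 * m)) (l : Fin m)
    (h : (i : ℕ) = 2 * (l : ℕ)) : itl e f i = e l := by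
  have h2 : (i : ℕ) % 2 = 0 := by omega
  rw [itl, if_pos h2]
  congr 1
  exact Fin.ext (by simp only [Fin.val_mk]; omega)

theorem itl_odd {m : ℕ} (e f : Fin m → V) (i : Fin (2 * m)) (l : Fin m)
    (h : (i : ℕ) = 2 * (l : ℕ) + 1) : itl e f i = f l := by
  have h2 : ¬ ((i : ℕ) % 2 = 0) := by omega
  rw [itl, if_neg h2]
  congr 1
  exact Fin.ext (by simp only [Fin.val_mk]; omega)

/-- the representative permutation: moves the `l`-th pair to the front -/
def rho (m : ℕ) (l : Fin (m + 1)) : Equiv.Perm (Fin (2 + 2 * m)) :=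
  (Equiv.swap ⟨0, by omega⟩ ⟨2 * (l : ℕ), by have := l.isLt; omega⟩) *
  (Equiv.swap ⟨1, by omega⟩ ⟨2 * (l : ℕ) + 1, by have := l.isLt; omega⟩)

theorem fin_swap_apply {n : ℕ} (a b x : Fin n)  :
    Equiv.swap a b x = if x = a then b else if x = b then a else x :=
  Equiv.swap_apply_def a b x

theorem rho_val (m : ℕ) (l : Fin (m + 1)) (p : Fin (2 + 2 * m)) :
    ((rho m l p : Fin (2 + 2 * m)) : ℕ) =
      if (p : ℕ) = 0 then 2 * (l : ℕ)
      else if (p : ℕ) = 1 then 2 * (l : ℕ) + 1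
      else if (p : ℕ) = 2 * (l : ℕ) then 0
      else if (p : ℕ) = 2 * (l : ℕ) + 1 then 1
      else (p : ℕ) := by
  rw [rho, Equiv.Perm.mul_apply, fin_swap_apply, fin_swap_apply]
  simp only [Fin.ext_iff]
  have hl := l.isLt
  have hp := p.isLt
  split_ifs <;> simp_all <;> omega

theorem rho_sign (m : ℕ) (l : Fin (m + 1)) : Equiv.Perm.sign (rho m l) = 1 := by
  rw [rho]
  rcases Nat.eq_zero_or_pos (l : ℕ) with hl | hl
  · have h1 : (⟨0, by omega⟩ : Fin (2 + 2 * m)) = ⟨2 * (l : ℕ), by have := l.isLt; omega⟩ :=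
      Fin.ext (by simp [hl])
    have h2 : (⟨1, by omega⟩ : Fin (2 + 2 * m)) = ⟨2 * (l : ℕ) + 1, by have := l.isLt; omega⟩ :=
      Fin.ext (by simp [hl])
    rw [h1, h2, Equiv.swap_self, Equiv.swap_self]
    simp
  · have h1 : (⟨0, by omega⟩ : Fin (2 + 2 * m)) ≠ ⟨2 * (l : ℕ), by have := l.isLt; omega⟩ := by
      simp only [ne_eq, Fin.ext_iff]; omega
    have h2 : (⟨1, by omega⟩ : Fin (2 + 2 * m)) ≠ ⟨2 * (l : ℕ) + 1, by have := l.isLt; omega⟩ := by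
      simp only [ne_eq, Fin.ext_iff]; omega
    rw [map_mul, Equiv.Perm.sign_swap h1, Equiv.Perm.sign_swap h2]
    simp

/-- deletion map: `dm l` enumerates `Fin (m+1) \ {l}`, with `l`-slot replaced by `0`. -/
def dm {m : ℕ} (l : Fin (m + 1)) : Fin m → Fin (m + 1) := fun j =>
  if (j : ℕ) + 1 = l then ⟨0, by omega⟩ else ⟨(j : ℕ) + 1, by have := j.isLt; omega⟩

theorem dm_inj {m : ℕ} (l : Fin (m + 1)) (i j : Fin m) :
    dm l i = dm l j ↔ i = j := by
  constructor
  · intro h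
    rw [dm, dm] at h
    split_ifs at h with h1 h2 h2 <;>
      simp only [Fin.ext_iff] at h ⊢ <;> omega
  · rintro rfl; rfl

end Aux4

section Aux5
variable {V : Type*} [AddCommGroup V] [Module ℝ V]

theorem beta_swap (β : V [⋀^Fin 2]→ₗ[ℝ] ℝ) (x y : V) : β ![y, x] = - β ![x, y] := by
  have h : ![y, x] = ![x, y] ∘ Equiv.swap (0 : Fin 2) 1 := by
    funext j
    fin_cases j <;> simp [Equiv.swap_apply_def]
  rw [h, AlternatingMap.map_swap β _ (by decide : (0 : Fin 2) ≠ 1)]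

theorem wpow_symplectic (β : V [⋀^Fin 2]→ₗ[ℝ] ℝ) :
    ∀ (m : ℕ) (e f : Fin m → V),
    (∀ i j, β ![e i, e j] = 0) → (∀ i j, β ![f i, f j] = 0) →
    (∀ i j, β ![e i, f j] = if i = j then 1 else 0) →
    wpow β m (itl e f) = (Nat.factorial m : ℝ) := by
  intro m
  induction m with
  | zero =>
    intro e f _ _ _
    simp [wpow, Nat.factorial]
  | succ m ih =>
    intro e f hee hff hef
    classical
    rw [show wpow β (m + 1) = AlternatingMap.domDomCongr
        (finCongr (by omega : 2 + 2 * m = 2 * (m + 1))) (wedge β (wpow β m)) from rfl]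
    rw [AlternatingMap.domDomCongr_apply, wedge_apply]
    set E : (Fin 2 ⊕ Fin (2 * m)) ≃ Fin (2 + 2 * m) := finSumFinEquiv with hE
    set t : Fin (2 + 2 * m) → V :=
      (itl e f) ∘ (finCongr (by omega : 2 + 2 * m = 2 * (m + 1))) with ht2
    have htval : ∀ (p : Fin (2 + 2 * m)) (l : Fin (m + 1)),
        (((p : ℕ) = 2 * (l : ℕ)) → t p = e l) ∧
        (((p : ℕ) = 2 * (l : ℕ) + 1) → t p = f l) := by
      intro p l
      constructor
      · intro hp
        exact itl_even e f (finCongr (by omega) p) l (by simpa using hp)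
      · intro hp
        exact itl_odd e f (finCongr (by omega) p) l (by simpa using hp)
    set σl : Fin (m + 1) → Equiv.Perm (Fin 2 ⊕ Fin (2 * m)) :=
      fun l => Equiv.permCongr E.symm (rho m l) with hσl
    have hσlapp : ∀ l x, E (σl l x) = rho m l (E x) := by
      intro l x
      simp [hσl, Equiv.permCongr_apply]
    set Q : Fin (m + 1) → Equiv.Perm.ModSumCongr (Fin 2) (Fin (2 * m)) :=
      fun l => Quotient.mk'' (σl l) with hQ
    set F : Equiv.Perm.ModSumCongr (Fin 2) (Fin (2 * m)) → ℝ := fun q =>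
      TensorProduct.lid ℝ ℝ
        (AlternatingMap.domCoprod.summand β (wpow β m) q (t ∘ E)) with hF
    -- values of E
    have hEinl0 : ((E (Sum.inl 0) : Fin (2 + 2 * m)) : ℕ) = 0 := by simp [hE]
    have hEinl1 : ((E (Sum.inl 1) : Fin (2 + 2 * m)) : ℕ) = 1 := by simp [hE]
    have hEinr : ∀ j : Fin (2 * m), ((E (Sum.inr j) : Fin (2 + 2 * m)) : ℕ) = 2 + j := by
      intro j; simp [hE]
    -- the key term computation
    have hterm : ∀ l : Fin (m + 1), F (Q l) = (Nat.factorial m : ℝ) := by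
      intro l
      show TensorProduct.lid ℝ ℝ
        (AlternatingMap.domCoprod.summand β (wpow β m) (Quotient.mk'' (σl l)) (t ∘ E)) = _
      rw [AlternatingMap.domCoprod.summand_mk'']
      have hsign : Equiv.Perm.sign (σl l) = 1 := by
        rw [hσl]
        rw [Equiv.Perm.sign_permCongr, rho_sign]
      rw [hsign, one_smul]
      rw [MultilinearMap.domDomCongr_apply, MultilinearMap.domCoprod_apply]
      have harg1 : (fun i : Fin 2 => (t ∘ E) (σl l (Sum.inl i))) = ![e l, f l] := by
        funext i
        fin_cases i
        · show t (E (σl l (Sum.inl 0))) = _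
          rw [hσlapp]
          have h0 : ((rho m l (E (Sum.inl 0)) : Fin (2 + 2 * m)) : ℕ) = 2 * (l : ℕ) := by
            rw [rho_val, hEinl0]
            norm_num
          simpa using (htval _ l).1 h0
        · show t (E (σl l (Sum.inl 1))) = _
          rw [hσlapp]
          have h1 : ((rho m l (E (Sum.inl 1)) : Fin (2 + 2 * m)) : ℕ) = 2 * (l : ℕ) + 1 := by
            rw [rho_val, hEinl1]
            norm_num
          simpa using (htval _ l).2 h1
      have harg2 : (fun j : Fin (2 * m) => (t ∘ E) (σl l (Sum.inr j))) =
          itl (e ∘ dm l) (f ∘ dm l) := by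
        funext j
        have hj := j.isLt
        have hl := l.isLt
        rw [Function.comp_apply, hσlapp]
        have hval : ((rho m l (E (Sum.inr j)) : Fin (2 + 2 * m)) : ℕ) =
            if 2 + (j : ℕ) = 2 * (l : ℕ) then 0
            else if 2 + (j : ℕ) = 2 * (l : ℕ) + 1 then 1
            else 2 + (j : ℕ) := by
          rw [rho_val, hEinr]
          rw [if_neg (by omega), if_neg (by omega)]
        by_cases hpar : (j : ℕ) % 2 = 0
        · have hrhs : itl (e ∘ dm l) (f ∘ dm l) j = e (dm l ⟨(j : ℕ) / 2, by omega⟩) :=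
            itl_even _ _ j ⟨(j : ℕ) / 2, by omega⟩ (by simp only [Fin.val_mk]; omega)
          rw [hrhs]
          by_cases hcl : 2 + (j : ℕ) = 2 * (l : ℕ)
          · have hdm : dm l ⟨(j : ℕ) / 2, by omega⟩ = (⟨0, by omega⟩ : Fin (m + 1)) := by
              simp only [dm, Fin.val_mk]
              rw [if_pos (by omega)]
            rw [hdm]
            refine (htval _ _).1 ?_
            rw [hval, if_pos hcl]
            simp
          · have hcl1 : ¬(2 + (j : ℕ) = 2 * (l : ℕ) + 1) := by omega
            have hdm : dm l ⟨(j : ℕ) / 2, by omega⟩ =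
                (⟨(j : ℕ) / 2 + 1, by omega⟩ : Fin (m + 1)) := by
              simp only [dm, Fin.val_mk]
              rw [if_neg (by omega)]
            rw [hdm]
            refine (htval _ _).1 ?_
            rw [hval, if_neg hcl, if_neg hcl1]
            simp only [Fin.val_mk]
            omega
        · have hrhs : itl (e ∘ dm l) (f ∘ dm l) j = f (dm l ⟨(j : ℕ) / 2, by omega⟩) :=
            itl_odd _ _ j ⟨(j : ℕ) / 2, by omega⟩ (by simp only [Fin.val_mk]; omega)
          rw [hrhs]
          by_cases hcl : 2 + (j : ℕ) = 2 * (l : ℕ) + 1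
          · have hdm : dm l ⟨(j : ℕ) / 2, by omega⟩ = (⟨0, by omega⟩ : Fin (m + 1)) := by
              simp only [dm, Fin.val_mk]
              rw [if_pos (by omega)]
            rw [hdm]
            refine (htval _ _).2 ?_
            rw [hval, if_neg (by omega), if_pos hcl]
            simp
          · have hdm : dm l ⟨(j : ℕ) / 2, by omega⟩ =
                (⟨(j : ℕ) / 2 + 1, by omega⟩ : Fin (m + 1)) := by
              simp only [dm, Fin.val_mk]
              rw [if_neg (by omega)]
            rw [hdm]
            refine (htval _ _).2 ?_
            rw [hval, if_neg (by omega), if_neg hcl]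
            simp only [Fin.val_mk]
            omega
      rw [AlternatingMap.coe_multilinearMap, AlternatingMap.coe_multilinearMap,
        harg1, harg2, TensorProduct.lid_tmul]
      rw [hef, if_pos rfl]
      have hee' : ∀ i j, β ![(e ∘ dm l) i, (e ∘ dm l) j] = 0 := fun i j => hee _ _
      have hff' : ∀ i j, β ![(f ∘ dm l) i, (f ∘ dm l) j] = 0 := fun i j => hff _ _
      have hef' : ∀ i j, β ![(e ∘ dm l) i, (f ∘ dm l) j] = if i = j then 1 else 0 := by
        intro i j
        rw [Function.comp_apply, Function.comp_apply, hef]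
        simp [dm_inj l i j]
      rw [ih (e ∘ dm l) (f ∘ dm l) hee' hff' hef']
      simp
    -- injectivity of Q
    have hQinj : ∀ l l' : Fin (m + 1), Q l = Q l' → l = l' := by
      intro l l' h
      have h2 := Quotient.exact' h
      obtain ⟨⟨sl, sr⟩, hpq⟩ := QuotientGroup.leftRel_apply.mp h2
      have hmul : σl l' = σl l * Equiv.Perm.sumCongrHom (Fin 2) (Fin (2 * m)) (sl, sr) := by
        rw [hpq, mul_inv_cancel_left]
      have hkey := congrArg (fun σ : Equiv.Perm (Fin 2 ⊕ Fin (2 * m)) =>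
        ((E (σ (Sum.inl 0)) : Fin (2 + 2 * m)) : ℕ)) hmul
      rw [hσlapp] at hkey
      rw [Equiv.Perm.mul_apply] at hkey
      have hsc : Equiv.Perm.sumCongrHom (Fin 2) (Fin (2 * m)) (sl, sr) (Sum.inl 0) =
          Sum.inl (sl 0) := by
        simp [Equiv.Perm.sumCongrHom]
      rw [hsc, hσlapp] at hkey
      rw [rho_val, hEinl0] at hkey
      norm_num at hkey
      have hl := l.isLt
      have hl' := l'.isLt
      refine Fin.ext ?_
      rcases Fin.exists_fin_two.mp ⟨sl 0, rfl⟩ with hx | hx <;> rw [hx] at hkey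
      · rw [rho_val, hEinl0] at hkey
        norm_num at hkey
        omega
      · rw [rho_val, hEinl1] at hkey
        norm_num at hkey
        omega
    -- vanishing away from the image of Q
    have hpair : ∀ p p' : Fin (2 + 2 * m), β ![t p, t p'] ≠ 0 →
        ∃ l : Fin (m + 1), ((p : ℕ) = 2 * (l : ℕ) ∧ (p' : ℕ) = 2 * (l : ℕ) + 1) ∨
          ((p : ℕ) = 2 * (l : ℕ) + 1 ∧ (p' : ℕ) = 2 * (l : ℕ)) := by
      intro p p' hne
      have hp := p.isLt
      have hp' := p'.isLt
      set a : Fin (m + 1) := ⟨(p : ℕ) / 2, by omega⟩ with ha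
      set a' : Fin (m + 1) := ⟨(p' : ℕ) / 2, by omega⟩ with ha'
      by_cases h1 : (p : ℕ) % 2 = 0 <;> by_cases h2 : (p' : ℕ) % 2 = 0
      · rw [(htval p a).1 (by rw [ha]; simp only [Fin.val_mk]; omega),
          (htval p' a').1 (by rw [ha']; simp only [Fin.val_mk]; omega)] at hne
        exact absurd (hee a a') hne
      · rw [(htval p a).1 (by rw [ha]; simp only [Fin.val_mk]; omega),
          (htval p' a').2 (by rw [ha']; simp only [Fin.val_mk]; omega)] at hne
        rw [hef] at hne
        have haa : a = a' := by
          by_contra hcon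
          rw [if_neg hcon] at hne
          exact hne rfl
        have hva : (a : ℕ) = (p : ℕ) / 2 := by rw [ha]
        have hva' : (a : ℕ) = (p' : ℕ) / 2 := by rw [haa, ha']
        exact ⟨a, Or.inl ⟨by omega, by omega⟩⟩
      · rw [(htval p a).2 (by rw [ha]; simp only [Fin.val_mk]; omega),
          (htval p' a').1 (by rw [ha']; simp only [Fin.val_mk]; omega)] at hne
        rw [beta_swap, hef] at hne
        have haa : a' = a := by
          by_contra hcon
          rw [if_neg hcon] at hne
          simp at hne
        have hva : (a : ℕ) = (p : ℕ) / 2 := by rw [ha]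
        have hva' : (a : ℕ) = (p' : ℕ) / 2 := by rw [← haa, ha']
        exact ⟨a, Or.inr ⟨by omega, by omega⟩⟩
      · rw [(htval p a).2 (by rw [ha]; simp only [Fin.val_mk]; omega),
          (htval p' a').2 (by rw [ha']; simp only [Fin.val_mk]; omega)] at hne
        exact absurd (hff a a') hne
    have hvanish : ∀ q, q ∉ Finset.image Q Finset.univ → F q = 0 := by
      intro q hq
      induction q using Quotient.inductionOn' with
      | h σ =>
        show TensorProduct.lid ℝ ℝ
          (AlternatingMap.domCoprod.summand β (wpow β m) (Quotient.mk'' σ) (t ∘ E)) = 0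
        rw [AlternatingMap.domCoprod.summand_mk'']
        rw [MultilinearMap.smul_apply, MultilinearMap.domDomCongr_apply,
          MultilinearMap.domCoprod_apply]
        have hfun : (fun i : Fin 2 => (t ∘ E) (σ (Sum.inl i))) =
            ![t (E (σ (Sum.inl 0))), t (E (σ (Sum.inl 1)))] := by
          funext i
          fin_cases i <;> simp
        by_cases hβ : β ![t (E (σ (Sum.inl 0))), t (E (σ (Sum.inl 1)))] = 0
        · rw [AlternatingMap.coe_multilinearMap, AlternatingMap.coe_multilinearMap,
            hfun, hβ, TensorProduct.zero_tmul, smul_zero, LinearEquiv.map_zero]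
        · exfalso
          apply hq
          obtain ⟨l, hl⟩ := hpair _ _ hβ
          have hin : ∀ x : Fin 2, (σl l)⁻¹ (σ (Sum.inl x)) ∈ Set.range (Sum.inl : Fin 2 → Fin 2 ⊕ Fin (2 * m)) := by
            intro x
            have hv0 : ((E (σl l (Sum.inl 0)) : Fin (2 + 2 * m)) : ℕ) = 2 * (l : ℕ) := by
              rw [hσlapp, rho_val, hEinl0]; norm_num
            have hv1 : ((E (σl l (Sum.inl 1)) : Fin (2 + 2 * m)) : ℕ) = 2 * (l : ℕ) + 1 := by
              rw [hσlapp, rho_val, hEinl1]; norm_num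
            rcases Fin.exists_fin_two.mp ⟨x, rfl⟩ with hx | hx <;> rw [hx] <;>
              rcases hl with ⟨hl0, hl1⟩ | ⟨hl0, hl1⟩
            · have : σ (Sum.inl 0) = σl l (Sum.inl 0) := by
                apply E.injective
                exact Fin.ext (by rw [hv0]; exact hl0)
              rw [this, ← Equiv.Perm.mul_apply, inv_mul_cancel, Equiv.Perm.one_apply]
              exact ⟨0, rfl⟩
            · have : σ (Sum.inl 0) = σl l (Sum.inl 1) := by
                apply E.injective
                exact Fin.ext (by rw [hv1]; exact hl0)
              rw [this, ← Equiv.Perm.mul_apply, inv_mul_cancel, Equiv.Perm.one_apply]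
              exact ⟨1, rfl⟩
            · have : σ (Sum.inl 1) = σl l (Sum.inl 1) := by
                apply E.injective
                exact Fin.ext (by rw [hv1]; exact hl1)
              rw [this, ← Equiv.Perm.mul_apply, inv_mul_cancel, Equiv.Perm.one_apply]
              exact ⟨1, rfl⟩
            · have : σ (Sum.inl 1) = σl l (Sum.inl 0) := by
                apply E.injective
                exact Fin.ext (by rw [hv0]; exact hl1)
              rw [this, ← Equiv.Perm.mul_apply, inv_mul_cancel, Equiv.Perm.one_apply]
              exact ⟨0, rfl⟩
          have hmaps : Set.MapsTo ((σl l)⁻¹ * σ) (Set.range Sum.inl) (Set.range Sum.inl) := by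
            rintro _ ⟨x, rfl⟩
            exact hin x
          have hmem := Equiv.Perm.mem_sumCongrHom_range_of_perm_mapsTo_inl hmaps
          refine Finset.mem_image.mpr ⟨l, Finset.mem_univ l, ?_⟩
          exact Quotient.sound' (QuotientGroup.leftRel_apply.mpr hmem)
    calc (∑ σ : Equiv.Perm.ModSumCongr (Fin 2) (Fin (2 * m)), F σ)
        = ∑ q ∈ Finset.image Q Finset.univ, F q :=
          (Finset.sum_subset (Finset.subset_univ _) (fun q _ hq => hvanish q hq)).symm
      _ = ∑ l : Fin (m + 1), F (Q l) :=
          Finset.sum_image (fun l _ l' _ h => hQinj l l' h)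
      _ = ∑ _l : Fin (m + 1), (Nat.factorial m : ℝ) :=
          Finset.sum_congr rfl (fun l _ => hterm l)
      _ = (Nat.factorial (m + 1) : ℝ) := by
          rw [Finset.sum_const, Finset.card_univ, Fintype.card_fin, Nat.factorial_succ]
          push_cast
          ring
end Aux5

section Aux6
variable {V : Type*} [AddCommGroup V] [Module ℝ V]

theorem vec_two_eq (x y : V) (u : Fin 2 → V) (h0 : u 0 = x) (h1 : u 1 = y) :
    u = ![x, y] := by
  funext j
  fin_cases j <;> simpa

theorem vec_update_left (x y : V) : ![x, y] = Function.update ![(0 : V), y] 0 x := by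
  funext j; fin_cases j <;> simp

theorem vec_update_right (x y : V) : ![x, y] = Function.update ![x, (0 : V)] 1 y := by
  funext j; fin_cases j <;> simp

/-- the bilinear form associated with an alternating 2-form -/
noncomputable def bil (β : V [⋀^Fin 2]→ₗ[ℝ] ℝ) : V →ₗ[ℝ] V →ₗ[ℝ] ℝ :=
  LinearMap.mk₂ ℝ (fun x y => β ![x, y])
    (fun x x' y => by
      show β ![x + x', y] = β ![x, y] + β ![x', y]
      rw [vec_update_left (x + x') y, vec_update_left x y, vec_update_left x' y,
        AlternatingMap.map_update_add])
    (fun c x y => by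
      show β ![c • x, y] = c • β ![x, y]
      rw [vec_update_left (c • x) y, vec_update_left x y, AlternatingMap.map_update_smul])
    (fun x y y' => by
      show β ![x, y + y'] = β ![x, y] + β ![x, y']
      rw [vec_update_right x (y + y'), vec_update_right x y, vec_update_right x y',
        AlternatingMap.map_update_add])
    (fun c x y => by
      show β ![x, c • y] = c • β ![x, y]
      rw [vec_update_right x (c • y), vec_update_right x y, AlternatingMap.map_update_smul])

theorem bil_apply (β : V [⋀^Fin 2]→ₗ[ℝ] ℝ) (x y : V) : bil β x y = β ![x, y] := rfl

theorem bil_skew (β : V [⋀^Fin 2]→ₗ[ℝ] ℝ) (x y : V) : bil β x y = - bil β y x := by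
  rw [bil_apply, bil_apply, beta_swap β y x]

theorem curryLeft_eq_zero_iff {β : V [⋀^Fin 2]→ₗ[ℝ] ℝ} {v : V} :
    β.curryLeft v = 0 ↔ bil β v = 0 := by
  constructor
  · intro h
    ext y
    have := congrFun (congrArg (fun (g : V [⋀^Fin 1]→ₗ[ℝ] ℝ) => g.toFun) h) (fun _ => y)
    simpa [AlternatingMap.curryLeft, bil_apply,
      show Fin.cons v (fun _ => y) = ![v, y] from vec_two_eq v y _ rfl rfl] using this
  · intro h
    ext w
    have h2 : β ![v, w 0] = 0 := by
      have := congrFun (congrArg (fun (g : V →ₗ[ℝ] ℝ) => g.toFun) h) (w 0)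
      simpa [bil_apply] using this
    have h3 : Matrix.vecCons v w = ![v, w 0] :=
      vec_two_eq v (w 0) _ rfl (by congr 1)
    simpa [AlternatingMap.curryLeft_apply_apply, h3] using h2

theorem bKer_top_eq (β : V [⋀^Fin 2]→ₗ[ℝ] ℝ) :
    bKer (bil β) ⊤ = LinearMap.ker β.curryLeft := by
  ext v
  rw [mem_bKer (bil β), LinearMap.mem_ker]
  constructor
  · rintro ⟨-, hall⟩
    rw [curryLeft_eq_zero_iff]
    ext y
    simpa using hall y trivial
  · intro hv
    refine ⟨trivial, fun x _ => ?_⟩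
    rw [curryLeft_eq_zero_iff] at hv
    rw [hv]
    simp

theorem finrank_le_ker_curryLeft [FiniteDimensional ℝ V] {β : V [⋀^Fin 2]→ₗ[ℝ] ℝ} {m : ℕ}
    (h : wpow β (m + 1) = 0) :
    finrank ℝ V ≤ finrank ℝ ↥(LinearMap.ker β.curryLeft) + 2 * m := by
  by_contra hcon
  push_neg at hcon
  have hle : finrank ℝ ↥(bKer (bil β) ⊤) + 2 * (m + 1) ≤ finrank ℝ (⊤ : Submodule ℝ V) + 1 := by
    rw [bKer_top_eq, finrank_top]
    omega
  obtain ⟨e, f, -, -, hee, hff, hef⟩ :=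
    exists_symplectic (bil β) (fun x y => bil_skew β x y) (m + 1) ⊤ hle
  have := wpow_symplectic β (m + 1) e f
    (fun i j => hee i j) (fun i j => hff i j) (fun i j => hef i j)
  rw [h] at this
  simp only [AlternatingMap.zero_apply] at this
  exact (Nat.cast_ne_zero.mpr (Nat.factorial_pos (m + 1)).ne') this.symm

end Aux6


set_option maxHeartbeats 1000000 in
/-- The splittings `V = G₁ ⊕ G₂ ⊕ ℝZ₁ ⊕ ℝZ₂`, `F₁ = G₁ ⊕ ℝZ₂` and `F₂ = G₂ ⊕ ℝZ₁`
associated with a linear contact pair with Reeb vectors `Z₁, Z₂`. -/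
theorem contact_pair_splittings {V : Type*} [AddCommGroup V] [Module ℝ V]
    [FiniteDimensional ℝ V] (h k : ℕ) (hdim : Module.finrank ℝ V = 2 * h + 2 * k + 2)
    (α₁ α₂ : V →ₗ[ℝ] ℝ) (β₁ β₂ : V [⋀^Fin 2]→ₗ[ℝ] ℝ)
    (hcp : IsLinearContactPair h k α₁ α₂ β₁ β₂)
    (Z₁ Z₂ : V) (hZ : IsReebPair α₁ α₂ β₁ β₂ Z₁ Z₂)
    (F₁ F₂ G₁ G₂ : Submodule ℝ V)
    (hF₁ : F₁ = LinearMap.ker α₁ ⊓ LinearMap.ker β₁.curryLeft)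
    (hF₂ : F₂ = LinearMap.ker α₂ ⊓ LinearMap.ker β₂.curryLeft)
    (hG₁ : G₁ = LinearMap.ker β₁.curryLeft ⊓ LinearMap.ker α₁ ⊓ LinearMap.ker α₂)
    (hG₂ : G₂ = LinearMap.ker β₂.curryLeft ⊓ LinearMap.ker α₁ ⊓ LinearMap.ker α₂) :
    DirectSum.IsInternal ![G₁, G₂, Submodule.span ℝ {Z₁}, Submodule.span ℝ {Z₂}] ∧
      (F₁ = G₁ ⊔ Submodule.span ℝ {Z₂} ∧ Disjoint G₁ (Submodule.span ℝ {Z₂})) ∧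
      (F₂ = G₂ ⊔ Submodule.span ℝ {Z₁} ∧ Disjoint G₂ (Submodule.span ℝ {Z₁})) := by
  classical
  obtain ⟨hα₁Z₁, hα₂Z₂, hα₁Z₂, hα₂Z₁, hβ₁Z₁, hβ₂Z₁, hβ₁Z₂, hβ₂Z₂⟩ := hZ
  set S₁ := Submodule.span ℝ {Z₁} with hS₁
  set S₂ := Submodule.span ℝ {Z₂} with hS₂
  -- membership characterizations
  have hG₁mem : ∀ v, v ∈ G₁ ↔ β₁.curryLeft v = 0 ∧ α₁ v = 0 ∧ α₂ v = 0 := by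
    intro v
    rw [hG₁]
    simp only [Submodule.mem_inf, LinearMap.mem_ker, and_assoc]
  have hG₂mem : ∀ v, v ∈ G₂ ↔ β₂.curryLeft v = 0 ∧ α₁ v = 0 ∧ α₂ v = 0 := by
    intro v
    rw [hG₂]
    simp only [Submodule.mem_inf, LinearMap.mem_ker, and_assoc]
  -- nonvanishing of Reeb vectors
  have hZ₁ne : Z₁ ≠ 0 := by
    intro hc
    rw [hc, map_zero] at hα₁Z₁
    exact one_ne_zero hα₁Z₁.symm
  have hZ₂ne : Z₂ ≠ 0 := by
    intro hc
    rw [hc, map_zero] at hα₂Z₂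
    exact one_ne_zero hα₂Z₂.symm
  have hrkS₁ : finrank ℝ ↥S₁ = 1 := finrank_span_singleton hZ₁ne
  have hrkS₂ : finrank ℝ ↥S₂ = 1 := finrank_span_singleton hZ₂ne
  -- rank bounds on the kernels
  have hK₁ : 2 * k + 2 ≤ finrank ℝ ↥(LinearMap.ker β₁.curryLeft) := by
    have := finrank_le_ker_curryLeft (m := h) hcp.pow_fst
    omega
  have hK₂ : 2 * h + 2 ≤ finrank ℝ ↥(LinearMap.ker β₂.curryLeft) := by
    have := finrank_le_ker_curryLeft (m := k) hcp.pow_snd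
    omega
  have hG₁rk : 2 * k ≤ finrank ℝ ↥G₁ := by
    have g1 := finrank_inf_ker_ge (LinearMap.ker β₁.curryLeft) α₁
    have g2 := finrank_inf_ker_ge (LinearMap.ker β₁.curryLeft ⊓ LinearMap.ker α₁) α₂
    rw [← hG₁] at g2
    omega
  have hG₂rk : 2 * h ≤ finrank ℝ ↥G₂ := by
    have g1 := finrank_inf_ker_ge (LinearMap.ker β₂.curryLeft) α₁
    have g2 := finrank_inf_ker_ge (LinearMap.ker β₂.curryLeft ⊓ LinearMap.ker α₁) α₂
    rw [← hG₂] at g2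
    omega
  -- G₁ ⊓ G₂ = ⊥ via the nonvanishing top form
  have hbot : G₁ ⊓ G₂ = ⊥ := by
    rw [Submodule.eq_bot_iff]
    intro v hv
    obtain ⟨hv1, hv2⟩ := Submodule.mem_inf.mp hv
    obtain ⟨hvβ₁, hvα₁, hvα₂⟩ := (hG₁mem v).mp hv1
    obtain ⟨hvβ₂, -, -⟩ := (hG₂mem v).mp hv2
    have hkill : Kills (cpForm h k α₁ α₂ β₁ β₂) v := by
      rw [show cpForm h k α₁ α₂ β₁ β₂ =
        wedge (oneForm α₁) (wedge (wpow β₁ h) (wedge (oneForm α₂) (wpow β₂ k))) from rfl]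
      exact (kills_oneForm hvα₁).wedge ((kills_wpow hvβ₁ h).wedge
        ((kills_oneForm hvα₂).wedge (kills_wpow hvβ₂ k)))
    exact eq_zero_of_kills hcp.top_ne_zero (by omega) hkill
  have hdisj12 : Disjoint G₁ G₂ := disjoint_iff.mpr hbot
  -- inclusions in kernels of the one-forms
  have hG₁α₁ : G₁ ≤ LinearMap.ker α₁ := fun v hv =>
    LinearMap.mem_ker.mpr ((hG₁mem v).mp hv).2.1
  have hG₁α₂ : G₁ ≤ LinearMap.ker α₂ := fun v hv =>
    LinearMap.mem_ker.mpr ((hG₁mem v).mp hv).2.2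
  have hG₂α₁ : G₂ ≤ LinearMap.ker α₁ := fun v hv =>
    LinearMap.mem_ker.mpr ((hG₂mem v).mp hv).2.1
  have hG₂α₂ : G₂ ≤ LinearMap.ker α₂ := fun v hv =>
    LinearMap.mem_ker.mpr ((hG₂mem v).mp hv).2.2
  have hS₁α₂ : S₁ ≤ LinearMap.ker α₂ := by
    rw [hS₁, Submodule.span_singleton_le_iff_mem, LinearMap.mem_ker]
    exact hα₂Z₁
  have hS₂α₁ : S₂ ≤ LinearMap.ker α₁ := by
    rw [hS₂, Submodule.span_singleton_le_iff_mem, LinearMap.mem_ker]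
    exact hα₁Z₂
  have hdka₁ : Disjoint (LinearMap.ker α₁) S₁ := by
    rw [Submodule.disjoint_def]
    intro x hx1 hx2
    obtain ⟨c, rfl⟩ := Submodule.mem_span_singleton.mp hx2
    have : c * α₁ Z₁ = 0 := by
      have := LinearMap.mem_ker.mp hx1
      rwa [map_smul, smul_eq_mul] at this
    rw [hα₁Z₁, mul_one] at this
    rw [this, zero_smul]
  have hdka₂ : Disjoint (LinearMap.ker α₂) S₂ := by
    rw [Submodule.disjoint_def]
    intro x hx1 hx2
    obtain ⟨c, rfl⟩ := Submodule.mem_span_singleton.mp hx2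
    have : c * α₂ Z₂ = 0 := by
      have := LinearMap.mem_ker.mp hx1
      rwa [map_smul, smul_eq_mul] at this
    rw [hα₂Z₂, mul_one] at this
    rw [this, zero_smul]
  -- finrank computation of the total sup
  have hd1 : Disjoint (G₁ ⊔ G₂) S₁ := Disjoint.mono_left (sup_le hG₁α₁ hG₂α₁) hdka₁
  have hd2 : Disjoint ((G₁ ⊔ G₂) ⊔ S₁) S₂ :=
    Disjoint.mono_left (sup_le (sup_le hG₁α₂ hG₂α₂) hS₁α₂) hdka₂
  have hr12 : finrank ℝ ↥(G₁ ⊔ G₂) = finrank ℝ ↥G₁ + finrank ℝ ↥G₂ := by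
    have := Submodule.finrank_sup_add_finrank_inf_eq G₁ G₂
    rw [hbot, finrank_bot] at this
    omega
  have hr123 : finrank ℝ ↥((G₁ ⊔ G₂) ⊔ S₁) = finrank ℝ ↥G₁ + finrank ℝ ↥G₂ + 1 := by
    have := Submodule.finrank_sup_add_finrank_inf_eq (G₁ ⊔ G₂) S₁
    rw [disjoint_iff.mp hd1, finrank_bot] at this
    omega
  have hr1234 : finrank ℝ ↥(((G₁ ⊔ G₂) ⊔ S₁) ⊔ S₂) =
      finrank ℝ ↥G₁ + finrank ℝ ↥G₂ + 2 := by
    have := Submodule.finrank_sup_add_finrank_inf_eq ((G₁ ⊔ G₂) ⊔ S₁) S₂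
    rw [disjoint_iff.mp hd2, finrank_bot] at this
    omega
  have hTle : finrank ℝ ↥(((G₁ ⊔ G₂) ⊔ S₁) ⊔ S₂) ≤ finrank ℝ V :=
    Submodule.finrank_le _
  have hTtop : ((G₁ ⊔ G₂) ⊔ S₁) ⊔ S₂ = ⊤ := by
    apply Submodule.eq_top_of_finrank_eq
    omega
  -- the members of the ![ ] family
  have hfam0 : (![G₁, G₂, S₁, S₂] : Fin 4 → Submodule ℝ V) 0 = G₁ := rfl
  have hfam1 : (![G₁, G₂, S₁, S₂] : Fin 4 → Submodule ℝ V) 1 = G₂ := rfl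
  have hfam2 : (![G₁, G₂, S₁, S₂] : Fin 4 → Submodule ℝ V) 2 = S₁ := rfl
  have hfam3 : (![G₁, G₂, S₁, S₂] : Fin 4 → Submodule ℝ V) 3 = S₂ := rfl
  have hsup : (⨆ i, (![G₁, G₂, S₁, S₂] : Fin 4 → Submodule ℝ V) i) = ⊤ := by
    apply le_antisymm le_top
    rw [← hTtop]
    refine sup_le (sup_le (sup_le ?_ ?_) ?_) ?_
    · exact hfam0 ▸ le_iSup (![G₁, G₂, S₁, S₂] : Fin 4 → Submodule ℝ V) 0
    · exact hfam1 ▸ le_iSup (![G₁, G₂, S₁, S₂] : Fin 4 → Submodule ℝ V) 1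
    · exact hfam2 ▸ le_iSup (![G₁, G₂, S₁, S₂] : Fin 4 → Submodule ℝ V) 2
    · exact hfam3 ▸ le_iSup (![G₁, G₂, S₁, S₂] : Fin 4 → Submodule ℝ V) 3
  -- decomposition of elements of sups with spans
  have hdec : ∀ (A : Submodule ℝ V) (x : V), x ∈ (A ⊔ S₁) ⊔ S₂ →
      ∃ g ∈ A, ∃ a b : ℝ, x = g + a • Z₁ + b • Z₂ := by
    intro A x hx
    obtain ⟨y, hy, z, hz, rfl⟩ := Submodule.mem_sup.mp hx
    obtain ⟨g, hg, w, hw, rfl⟩ := Submodule.mem_sup.mp hy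
    obtain ⟨a, rfl⟩ := Submodule.mem_span_singleton.mp hw
    obtain ⟨b, rfl⟩ := Submodule.mem_span_singleton.mp hz
    exact ⟨g, hg, a, b, rfl⟩
  -- the two hard disjointness facts
  have hdisjG₁ : Disjoint G₁ ((G₂ ⊔ S₁) ⊔ S₂) := by
    rw [Submodule.disjoint_def]
    intro x hxG hxO
    obtain ⟨g, hg, a, b, rfl⟩ := hdec G₂ x hxO
    obtain ⟨-, hxα₁, hxα₂⟩ := (hG₁mem _).mp hxG
    have hga₁ : α₁ g = 0 := LinearMap.mem_ker.mp (hG₂α₁ hg)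
    have hga₂ : α₂ g = 0 := LinearMap.mem_ker.mp (hG₂α₂ hg)
    have ha : a = 0 := by
      simp only [map_add, map_smul, smul_eq_mul, hga₁, hα₁Z₁, hα₁Z₂] at hxα₁
      linarith
    have hb : b = 0 := by
      simp only [map_add, map_smul, smul_eq_mul, hga₂, hα₂Z₁, hα₂Z₂] at hxα₂
      linarith
    rw [ha, hb, zero_smul, zero_smul, add_zero, add_zero] at hxG ⊢
    have : g ∈ G₁ ⊓ G₂ := Submodule.mem_inf.mpr ⟨hxG, hg⟩
    rw [hbot] at this
    exact this
  have hdisjG₂ : Disjoint G₂ ((G₁ ⊔ S₁) ⊔ S₂) := by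
    rw [Submodule.disjoint_def]
    intro x hxG hxO
    obtain ⟨g, hg, a, b, rfl⟩ := hdec G₁ x hxO
    obtain ⟨-, hxα₁, hxα₂⟩ := (hG₂mem _).mp hxG
    have hga₁ : α₁ g = 0 := LinearMap.mem_ker.mp (hG₁α₁ hg)
    have hga₂ : α₂ g = 0 := LinearMap.mem_ker.mp (hG₁α₂ hg)
    have ha : a = 0 := by
      simp only [map_add, map_smul, smul_eq_mul, hga₁, hα₁Z₁, hα₁Z₂] at hxα₁
      linarith
    have hb : b = 0 := by
      simp only [map_add, map_smul, smul_eq_mul, hga₂, hα₂Z₁, hα₂Z₂] at hxα₂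
      linarith
    rw [ha, hb, zero_smul, zero_smul, add_zero, add_zero] at hxG ⊢
    have : g ∈ G₁ ⊓ G₂ := Submodule.mem_inf.mpr ⟨hg, hxG⟩
    rw [hbot] at this
    exact this
  -- independence
  have hind : iSupIndep (![G₁, G₂, S₁, S₂] : Fin 4 → Submodule ℝ V) := by
    rw [iSupIndep_def]
    intro i
    fin_cases i
    · refine Disjoint.mono_right ?_ hdisjG₁
      refine iSup_le fun j => iSup_le fun hji => ?_
      fin_cases j
      · exact (hji (by rfl)).elim
      · exact le_sup_left.trans le_sup_left
      · exact le_sup_right.trans le_sup_left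
      · exact le_sup_right
    · refine Disjoint.mono_right ?_ hdisjG₂
      refine iSup_le fun j => iSup_le fun hji => ?_
      fin_cases j
      · exact le_sup_left.trans le_sup_left
      · exact (hji (by rfl)).elim
      · exact le_sup_right.trans le_sup_left
      · exact le_sup_right
    · refine Disjoint.mono_right ?_ hdka₁.symm
      refine iSup_le fun j => iSup_le fun hji => ?_
      fin_cases j
      · exact hG₁α₁
      · exact hG₂α₁
      · exact (hji (by rfl)).elim
      · exact hS₂α₁
    · refine Disjoint.mono_right ?_ hdka₂.symm
      refine iSup_le fun j => iSup_le fun hji => ?_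
      fin_cases j
      · exact hG₁α₂
      · exact hG₂α₂
      · exact hS₁α₂
      · exact (hji (by rfl)).elim
  have hinternal : DirectSum.IsInternal (![G₁, G₂, S₁, S₂] : Fin 4 → Submodule ℝ V) :=
    (DirectSum.isInternal_submodule_iff_iSupIndep_and_iSup_eq_top _).mpr ⟨hind, hsup⟩
  -- the F splittings
  have hZ₂F₁ : Z₂ ∈ F₁ := by
    rw [hF₁]
    exact Submodule.mem_inf.mpr ⟨LinearMap.mem_ker.mpr hα₁Z₂, LinearMap.mem_ker.mpr hβ₁Z₂⟩
  have hZ₁F₂ : Z₁ ∈ F₂ := by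
    rw [hF₂]
    exact Submodule.mem_inf.mpr ⟨LinearMap.mem_ker.mpr hα₂Z₁, LinearMap.mem_ker.mpr hβ₂Z₁⟩
  have hF₁eq : F₁ = G₁ ⊔ S₂ := by
    apply le_antisymm
    · intro v hv
      rw [hF₁] at hv
      obtain ⟨hvα₁, hvβ₁⟩ := Submodule.mem_inf.mp hv
      rw [LinearMap.mem_ker] at hvα₁ hvβ₁
      have hmem : v - α₂ v • Z₂ ∈ G₁ := by
        refine (hG₁mem _).mpr ⟨?_, ?_, ?_⟩
        · rw [map_sub, map_smul, hvβ₁, hβ₁Z₂, smul_zero, sub_zero]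
        · rw [map_sub, map_smul, hvα₁, hα₁Z₂, smul_eq_mul, mul_zero, sub_zero]
        · rw [map_sub, map_smul, hα₂Z₂, smul_eq_mul, mul_one, sub_self]
      have hv2 : v = (v - α₂ v • Z₂) + α₂ v • Z₂ := by abel
      rw [hv2]
      exact Submodule.add_mem_sup hmem
        (Submodule.smul_mem _ _ (Submodule.mem_span_singleton_self _))
    · refine sup_le ?_ ?_
      · intro v hv
        obtain ⟨hvβ, hvα₁, -⟩ := (hG₁mem v).mp hv
        rw [hF₁]
        exact Submodule.mem_inf.mpr ⟨LinearMap.mem_ker.mpr hvα₁, LinearMap.mem_ker.mpr hvβ⟩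
      · rw [hS₂, Submodule.span_singleton_le_iff_mem]
        exact hZ₂F₁
  have hF₂eq : F₂ = G₂ ⊔ S₁ := by
    apply le_antisymm
    · intro v hv
      rw [hF₂] at hv
      obtain ⟨hvα₂, hvβ₂⟩ := Submodule.mem_inf.mp hv
      rw [LinearMap.mem_ker] at hvα₂ hvβ₂
      have hmem : v - α₁ v • Z₁ ∈ G₂ := by
        refine (hG₂mem _).mpr ⟨?_, ?_, ?_⟩
        · rw [map_sub, map_smul, hvβ₂, hβ₂Z₁, smul_zero, sub_zero]
        · rw [map_sub, map_smul, hα₁Z₁, smul_eq_mul, mul_one, sub_self]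
        · rw [map_sub, map_smul, hvα₂, hα₂Z₁, smul_eq_mul, mul_zero, sub_zero]
      have hv2 : v = (v - α₁ v • Z₁) + α₁ v • Z₁ := by abel
      rw [hv2]
      exact Submodule.add_mem_sup hmem
        (Submodule.smul_mem _ _ (Submodule.mem_span_singleton_self _))
    · refine sup_le ?_ ?_
      · intro v hv
        obtain ⟨hvβ, -, hvα₂⟩ := (hG₂mem v).mp hv
        rw [hF₂]
        exact Submodule.mem_inf.mpr ⟨LinearMap.mem_ker.mpr hvα₂, LinearMap.mem_ker.mpr hvβ⟩
      · rw [hS₁, Submodule.span_singleton_le_iff_mem]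
        exact hZ₁F₂
  exact ⟨hinternal, ⟨hF₁eq, Disjoint.mono_left hG₁α₂ hdka₂⟩,
    ⟨hF₂eq, Disjoint.mono_left hG₂α₁ hdka₁⟩⟩
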